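/- Let G be a finite simple graph and L(G) its line graph. Let S and Ŝ be finite sets of vertices of L(G), and let Ŝ* ⊆ Ŝ be any independent set of L(G) with |Ŝ*| = α(Ŝ). Then |Ŝ* ∩ S| ≥ α(S) − α(S \ Ŝ) − α(Ŝ \ S) ≥ α(S) − 2·α((S \ Ŝ) ∪ (Ŝ \ S)). (This is the Trust guarantee for the online independent set problem on line graphs under the vertex-arrival model: Trust accepts exactly the vertices of Ŝ* that arrive, so it is strictly (1 − 2γ)-competitive, where γ = α((S \ Ŝ) ∪ (Ŝ \ S))/α(S).) -/

import Mathlib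

open scoped Classical

/-- A finite set `T` of vertices of a graph `H` is an independent set if no two of
its elements are adjacent in `H`. -/
def IsIndepSetIn {W : Type*} (H : SimpleGraph W) (T : Finset W) : Prop :=
  ∀ a ∈ T, ∀ b ∈ T, ¬ H.Adj a b

/-- `alphaIn H T` is the maximum cardinality of a subset of `T` that is an
independent set in `H`. -/
noncomputable def alphaIn {W : Type*} (H : SimpleGraph W) (T : Finset W) : ℕ :=
  (T.powerset.filter fun U => IsIndepSetIn H U).sup Finset.card

lemma card_le_alphaIn {W : Type*} (H : SimpleGraph W) {T U : Finset W}
    (hUT : U ⊆ T) (hU : IsIndepSetIn H U) : U.card ≤ alphaIn H T :=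
  Finset.le_sup (by simp [Finset.mem_filter, Finset.mem_powerset, hUT, hU])

lemma exists_alphaIn {W : Type*} (H : SimpleGraph W) (T : Finset W) :
    ∃ U, U ⊆ T ∧ IsIndepSetIn H U ∧ U.card = alphaIn H T := by
  have hne : (T.powerset.filter fun U => IsIndepSetIn H U).Nonempty := by
    refine ⟨∅, ?_⟩
    exact Finset.mem_filter.mpr ⟨Finset.empty_mem_powerset T, fun a ha => by simp at ha⟩
  obtain ⟨U, hU, hcard⟩ := Finset.exists_mem_eq_sup _ hne Finset.card
  simp only [Finset.mem_filter, Finset.mem_powerset] at hU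
  exact ⟨U, hU.1, hU.2, hcard.symm⟩

lemma alphaIn_mono {W : Type*} (H : SimpleGraph W) {T T' : Finset W}
    (h : T ⊆ T') : alphaIn H T ≤ alphaIn H T' := by
  obtain ⟨U, hUT, hind, hcard⟩ := exists_alphaIn H T
  exact hcard ▸ card_le_alphaIn H (hUT.trans h) hind

lemma indep_subset {W : Type*} (H : SimpleGraph W) {T U : Finset W}
    (h : U ⊆ T) (hT : IsIndepSetIn H T) : IsIndepSetIn H U :=
  fun a ha b hb => hT a (h ha) b (h hb)

/-- Trust guarantee for online independent set on line graphs under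
vertex arrival. Let `G` be a finite simple graph and `L(G)` its line graph. For
finite sets `S`, `Shat` of vertices of `L(G)` and any independent set
`Sstar ⊆ Shat` of `L(G)` with `|Sstar| = α(Shat)`,
`|Sstar ∩ S| ≥ α(S) − α(S \ Shat) − α(Shat \ S) ≥ α(S) − 2·α((S \ Shat) ∪ (Shat \ S))`. -/
theorem trust_independent_set_line_graph_competitive
    {V : Type*} [Fintype V] [DecidableEq V] (G : SimpleGraph V)
    (S Shat : Finset G.edgeSet)
    (Sstar : Finset G.edgeSet) (hsub : Sstar ⊆ Shat)
    (hindep : IsIndepSetIn G.lineGraph Sstar)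
    (hopt : Sstar.card = alphaIn G.lineGraph Shat) :
    (alphaIn G.lineGraph S : ℤ) - alphaIn G.lineGraph (S \ Shat) -
        alphaIn G.lineGraph (Shat \ S) ≤ ((Sstar ∩ S).card : ℤ) ∧
    (alphaIn G.lineGraph S : ℤ) - 2 * alphaIn G.lineGraph ((S \ Shat) ∪ (Shat \ S)) ≤
      (alphaIn G.lineGraph S : ℤ) - alphaIn G.lineGraph (S \ Shat) -
        alphaIn G.lineGraph (Shat \ S) := by
  set H := G.lineGraph
  obtain ⟨I, hIS, hIind, hIcard⟩ := exists_alphaIn H S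
  -- |I ∩ Shat| ≤ |Sstar|
  have h1 : (I ∩ Shat).card ≤ Sstar.card := by
    rw [hopt]
    exact card_le_alphaIn H Finset.inter_subset_right
      (indep_subset H Finset.inter_subset_left hIind)
  -- |I \ Shat| ≤ α(S \ Shat)
  have h2 : (I \ Shat).card ≤ alphaIn H (S \ Shat) :=
    card_le_alphaIn H (fun x hx => by
      simp only [Finset.mem_sdiff] at hx ⊢
      exact ⟨hIS hx.1, hx.2⟩)
      (indep_subset H (Finset.sdiff_subset) hIind)
  -- |Sstar \ S| ≤ α(Shat \ S)
  have h3 : (Sstar \ S).card ≤ alphaIn H (Shat \ S) :=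
    card_le_alphaIn H (fun x hx => by
      simp only [Finset.mem_sdiff] at hx ⊢
      exact ⟨hsub hx.1, hx.2⟩)
      (indep_subset H (Finset.sdiff_subset) hindep)
  have hI : (I ∩ Shat).card + (I \ Shat).card = I.card :=
    Finset.card_inter_add_card_sdiff I Shat
  have hSs : (Sstar ∩ S).card + (Sstar \ S).card = Sstar.card :=
    Finset.card_inter_add_card_sdiff Sstar S
  have m1 : alphaIn H (S \ Shat) ≤ alphaIn H ((S \ Shat) ∪ (Shat \ S)) :=
    alphaIn_mono H Finset.subset_union_left
  have m2 : alphaIn H (Shat \ S) ≤ alphaIn H ((S \ Shat) ∪ (Shat \ S)) :=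
    alphaIn_mono H Finset.subset_union_right
  constructor
  · have := hIcard
    omega
  · omega
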